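/- Let n ≥ 3 and k = 2ⁿ. Define f on {0,1,2,3} by f(0)=2, f(1)=3, f(2)=0, f(3)=1, and let Y = (1/k)·I − (2/k)·ψ₂^{⊗n} on ℂ^{4ⁿ}. Then for every vector i = (i₁,…,iₙ) with i₁ = 0 and i₂,…,iₙ ∈ {1,2,3}, the operator Y − T_A(ψ_{i₁}⊗⋯⊗ψ_{iₙ}) is positive semidefinite, and Tr(Y) < k. Consequently, since 3^{n−1} ≥ 2ⁿ, there exist k = 2ⁿ maximally entangled states in ℂᵏ⊗ℂᵏ that no PPT measurement distinguishes perfectly. -/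

import Mathlib

open Matrix

noncomputable def pauli : Fin 4 → Matrix (Fin 2) (Fin 2) ℂ
  | 0 => 1
  | 1 => !![0, 1; 1, 0]
  | 2 => !![0, -Complex.I; Complex.I, 0]
  | 3 => !![1, 0; 0, -1]

/-- Density operator of the Bell state `|ψᵢ⟩ = (1 ⊗ σᵢ)|ψ₀⟩`,
`|ψ₀⟩ = (|00⟩+|11⟩)/√2`, as a matrix on `ℂ² ⊗ ℂ²`. -/
noncomputable def bell (i : Fin 4) :
    Matrix (Fin 2 × Fin 2) (Fin 2 × Fin 2) ℂ :=
  fun p q => (1 / 2 : ℂ) * pauli i p.2 p.1 * (starRingEnd ℂ) (pauli i q.2 q.1)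

/-- Partial transpose on the first tensor factor. -/
def PT {d : ℕ} (X : Matrix (Fin d × Fin d) (Fin d × Fin d) ℂ) :
    Matrix (Fin d × Fin d) (Fin d × Fin d) ℂ :=
  fun p q => X (q.1, p.2) (p.1, q.2)

open scoped ComplexOrder

/-- `n`-fold tensor product of Bell density operators. -/
noncomputable def nBell {n : ℕ} (i : Fin n → Fin 4) :
    Matrix (Fin n → Fin 2 × Fin 2) (Fin n → Fin 2 × Fin 2) ℂ :=
  fun p q => ∏ l, bell (i l) (p l) (q l)

/-- Partial transpose acting factorwise on all `n` Alice qubits. -/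
def PTn {n : ℕ} (X : Matrix (Fin n → Fin 2 × Fin 2) (Fin n → Fin 2 × Fin 2) ℂ) :
    Matrix (Fin n → Fin 2 × Fin 2) (Fin n → Fin 2 × Fin 2) ℂ :=
  fun p q => X (fun l => ((q l).1, (p l).2)) (fun l => ((p l).1, (q l).2))

/-- `u` is a maximally entangled unit vector of `ℂᵏ ⊗ ℂᵏ`. -/
def IsMaxEnt {k : ℕ} (u : Fin k × Fin k → ℂ) : Prop :=
  ∃ V ∈ Matrix.unitaryGroup (Fin k) ℂ,
    u = fun p => (1 / Real.sqrt k : ℂ) * V p.2 p.1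

def f4 : Fin 4 → Fin 4 := ![2, 3, 0, 1]

lemma pauli_unitary (i : Fin 4) : pauli i * (pauli i)ᴴ = 1 := by
  fin_cases i <;> ext p q <;> fin_cases p <;> fin_cases q <;>
    simp [pauli, Matrix.mul_apply, Fin.sum_univ_two, Matrix.one_apply] <;> ring_nf <;>
    simp [Complex.ext_iff]

lemma bell_sum : ∑ i : Fin 4, bell i = 1 := by
  ext p q
  obtain ⟨p1, p2⟩ := p; obtain ⟨q1, q2⟩ := q
  fin_cases p1 <;> fin_cases p2 <;> fin_cases q1 <;> fin_cases q2 <;>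
    simp [bell, pauli, Fin.sum_univ_four, Matrix.one_apply, Finset.sum_apply] <;>
    ring_nf <;> simp [Complex.ext_iff, Prod.ext_iff, Fin.ext_iff] <;> ring

lemma PT_bell (i : Fin 4) : PT (bell i) = (1/2 : ℂ) • 1 - bell (f4 i) := by
  ext p q
  obtain ⟨p1, p2⟩ := p; obtain ⟨q1, q2⟩ := q
  fin_cases i <;> fin_cases p1 <;> fin_cases p2 <;> fin_cases q1 <;> fin_cases q2 <;>
    simp [PT, bell, pauli, f4, Matrix.one_apply] <;> ring_nf <;>
    simp [Complex.ext_iff, Prod.ext_iff, Fin.ext_iff] <;> ring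

lemma bell_trace (i : Fin 4) : Matrix.trace (bell i) = 1 := by
  fin_cases i <;>
    simp [Matrix.trace, bell, pauli, Fintype.sum_prod_type, Fin.sum_univ_two, Matrix.diag] <;>
    ring_nf <;> simp [Complex.ext_iff, Prod.ext_iff, Fin.ext_iff] <;> ring

noncomputable def cc (i m : Fin 4) : ℝ := if m = f4 i then -(1/2) else 1/2

lemma abs_cc (i m : Fin 4) : |cc i m| = 1/2 := by
  unfold cc; split <;> simp

lemma PT_bell' (i : Fin 4) :
    PT (bell i) = ∑ m : Fin 4, (cc i m : ℂ) • bell m := by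
  rw [PT_bell]
  have : ∀ m : Fin 4, (cc i m : ℂ) • bell m
      = (1/2 : ℂ) • bell m - (if m = f4 i then bell m else 0) := by
    intro m
    unfold cc; split <;> simp <;> module
  rw [Finset.sum_congr rfl (fun m _ => this m), Finset.sum_sub_distrib,
    ← Finset.smul_sum, bell_sum, Finset.sum_ite_eq' Finset.univ (f4 i)]
  simp

lemma one_tensor {n : ℕ} (p q : Fin n → Fin 2 × Fin 2) :
    (1 : Matrix (Fin n → Fin 2 × Fin 2) (Fin n → Fin 2 × Fin 2) ℂ) p q
      = ∏ l, (1 : Matrix (Fin 2 × Fin 2) (Fin 2 × Fin 2) ℂ) (p l) (q l) := by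
  by_cases h : p = q
  · subst h; simp [Matrix.one_apply]
  · obtain ⟨l, hl⟩ := Function.ne_iff.mp h
    rw [Matrix.one_apply_ne h]
    symm
    apply Finset.prod_eq_zero (Finset.mem_univ l)
    exact Matrix.one_apply_ne hl

lemma bell_sum' (a b : Fin 2 × Fin 2) :
    ∑ m : Fin 4, bell m a b = (1 : Matrix (Fin 2 × Fin 2) (Fin 2 × Fin 2) ℂ) a b := by
  rw [← Matrix.sum_apply, bell_sum]

noncomputable def lam {n : ℕ} (i j : Fin n → Fin 4) : ℝ :=
  1/2^n - (if j = fun _ => 2 then 2/2^n else 0) - ∏ l, cc (i l) (j l)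

lemma key {n : ℕ} (i : Fin n → Fin 4) :
    (1 / 2 ^ n : ℂ) • (1 : Matrix (Fin n → Fin 2 × Fin 2) (Fin n → Fin 2 × Fin 2) ℂ)
        - (2 / 2 ^ n : ℂ) • nBell (fun _ => 2) - PTn (nBell i)
      = ∑ j : Fin n → Fin 4, (lam i j : ℂ) • nBell j := by
  ext p q
  have e1 : ∑ j : Fin n → Fin 4, (1/2^n : ℂ) * nBell j p q
      = (1/2^n : ℂ) * (1 : Matrix (Fin n → Fin 2 × Fin 2) (Fin n → Fin 2 × Fin 2) ℂ) p q := by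
    rw [← Finset.mul_sum, one_tensor]
    congr 1
    simp only [nBell]
    rw [← Fintype.prod_sum (fun (l : Fin n) (m : Fin 4) => bell m (p l) (q l))]
    exact Finset.prod_congr rfl fun l _ => bell_sum' (p l) (q l)
  simp only [Matrix.sub_apply, Matrix.smul_apply, Matrix.sum_apply, smul_eq_mul]
  have hterm : ∀ j : Fin n → Fin 4, ((lam i j : ℝ) : ℂ) * nBell j p q
      = (1/2^n : ℂ) * nBell j p q
        - (if j = (fun _ => 2) then (2/2^n : ℂ) else 0) * nBell j p q
        - ((∏ l, cc (i l) (j l) : ℝ) : ℂ) * nBell j p q := by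
    intro j
    simp only [lam]
    push_cast [apply_ite (fun x : ℝ => (x : ℂ))]
    split <;> ring
  rw [Finset.sum_congr rfl fun j _ => hterm j, Finset.sum_sub_distrib,
    Finset.sum_sub_distrib, e1]
  congr 1
  congr 1
  · rw [Finset.sum_eq_single (fun _ => (2 : Fin 4))
      (fun b _ hb => by rw [if_neg hb, zero_mul])
      (fun h => absurd (Finset.mem_univ _) h), if_pos rfl]
  · have h0 : PTn (nBell i) p q = ∏ l, PT (bell (i l)) (p l) (q l) := rfl
    rw [h0]
    have h2 : ∀ l, PT (bell (i l)) (p l) (q l)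
        = ∑ m : Fin 4, ((cc (i l) m : ℝ) : ℂ) * bell m (p l) (q l) := by
      intro l
      rw [PT_bell' (i l)]
      simp [Matrix.sum_apply]
    rw [Finset.prod_congr rfl fun l _ => h2 l,
      Fintype.prod_sum (fun (l : Fin n) (m : Fin 4) => ((cc (i l) m : ℝ) : ℂ) * bell m (p l) (q l))]
    refine Finset.sum_congr rfl fun j _ => ?_
    rw [Finset.prod_mul_distrib]
    push_cast
    rfl

lemma prod_cc_le {n : ℕ} (i j : Fin n → Fin 4) :
    ∏ l, cc (i l) (j l) ≤ (1/2)^n := by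
  calc ∏ l, cc (i l) (j l) ≤ |∏ l, cc (i l) (j l)| := le_abs_self _
    _ = ∏ l, |cc (i l) (j l)| := Finset.abs_prod _ _
    _ = (1/2)^n := by
        rw [Finset.prod_congr rfl fun l _ => abs_cc (i l) (j l)]
        simp

lemma lam_nonneg {n : ℕ} (hn : 3 ≤ n) (i : Fin n → Fin 4)
    (h0 : i ⟨0, Nat.lt_of_lt_of_le (by norm_num) hn⟩ = 0)
    (h1 : ∀ l : Fin n, l.val ≠ 0 → i l ∈ ({1, 2, 3} : Set (Fin 4)))
    (j : Fin n → Fin 4) : 0 ≤ lam i j := by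
  unfold lam
  by_cases hj : j = fun _ => 2
  · subst hj
    rw [if_pos rfl]
    have hcc : ∀ l : Fin n, cc (i l) 2 = if l = ⟨0, by omega⟩ then -(1/2) else 1/2 := by
      intro l
      by_cases hl : l = ⟨0, by omega⟩
      · subst hl; rw [if_pos rfl]; unfold cc; rw [if_pos (by rw [h0]; rfl)]
      · rw [if_neg hl]
        have hil := h1 l (by
          intro hv
          exact hl (Fin.ext hv))
        unfold cc
        rw [if_neg ?_]
        have : i l = 1 ∨ i l = 2 ∨ i l = 3 := by
          simpa [Set.mem_insert_iff] using hil
        rcases this with h | h | h <;> rw [h] <;> decide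
    rw [Finset.prod_congr rfl fun l _ => hcc l,
      ← Finset.mul_prod_erase Finset.univ _ (Finset.mem_univ (⟨0, by omega⟩ : Fin n)),
      if_pos rfl]
    have he : ∏ l ∈ Finset.univ.erase (⟨0, by omega⟩ : Fin n),
        (if l = ⟨0, by omega⟩ then -(1/2 : ℝ) else 1/2) = (1/2)^(n-1) := by
      rw [Finset.prod_congr rfl (fun l hl => if_neg (Finset.ne_of_mem_erase hl)),
        Finset.prod_const, Finset.card_erase_of_mem (Finset.mem_univ _),
        Finset.card_univ, Fintype.card_fin]
    rw [he]
    have hp : (-(1/2 : ℝ)) * (1/2)^(n-1) = -(1/2^n) := by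
      have hn1 : n - 1 + 1 = n := by omega
      have h12 : (1/2 : ℝ) * (1/2)^(n-1) = (1/2)^n := by
        rw [← pow_succ', hn1]
      calc -(1/2 : ℝ) * (1/2)^(n-1) = -((1/2) * (1/2)^(n-1)) := by ring
        _ = -((1/2)^n) := by rw [h12]
        _ = -(1/2^n) := by rw [div_pow, one_pow]
    rw [hp]
    have : (0:ℝ) < 2^n := by positivity
    rw [sub_neg_eq_add]
    field_simp
    norm_num
  · rw [if_neg hj, sub_zero, sub_nonneg]
    calc ∏ l, cc (i l) (j l) ≤ (1/2)^n := prod_cc_le i j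
      _ = 1/2^n := by rw [div_pow, one_pow]

lemma psd_vecMulVec {m : Type*} [Fintype m] (u : m → ℂ) :
    (Matrix.vecMulVec u (star u)).PosSemidef := by
  refine Matrix.PosSemidef.of_dotProduct_mulVec_nonneg ?_ ?_
  · ext p q
    simp [Matrix.vecMulVec_apply, Matrix.conjTranspose_apply, mul_comm]
  · intro x
    have h1 : ∀ p, (Matrix.vecMulVec u (star u)).mulVec x p
        = u p * ∑ q, (starRingEnd ℂ) (u q) * x q := by
      intro p
      simp [Matrix.mulVec, Matrix.vecMulVec_apply, dotProduct, Finset.mul_sum, mul_assoc]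
    have h2 : star x ⬝ᵥ (Matrix.vecMulVec u (star u)).mulVec x
        = (starRingEnd ℂ) (∑ q, (starRingEnd ℂ) (u q) * x q) * (∑ q, (starRingEnd ℂ) (u q) * x q) := by
      simp only [dotProduct, h1, Pi.star_apply]
      rw [map_sum, Finset.sum_mul]
      refine Finset.sum_congr rfl fun p _ => ?_
      simp [RCLike.star_def, mul_comm, mul_left_comm, mul_assoc]
    rw [h2]
    exact star_mul_self_nonneg _

lemma psd_smul {m : Type*} [Fintype m] {M : Matrix m m ℂ} (hM : M.PosSemidef)
    {c : ℝ} (hc : 0 ≤ c) : ((c : ℂ) • M).PosSemidef := by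
  refine Matrix.PosSemidef.of_dotProduct_mulVec_nonneg ?_ ?_
  · ext p q
    simp only [Matrix.conjTranspose_apply, Matrix.smul_apply, star_mul', smul_eq_mul]
    rw [hM.1.apply p q, Complex.star_def, Complex.conj_ofReal]
  · intro x
    rw [Matrix.smul_mulVec, dotProduct_smul, smul_eq_mul]
    exact mul_nonneg (Complex.zero_le_real.mpr hc) (hM.dotProduct_mulVec_nonneg x)

lemma psd_sum {m ι : Type*} [Fintype m] [Fintype ι] (f : ι → Matrix m m ℂ)
    (hf : ∀ j, (f j).PosSemidef) : (∑ j, f j).PosSemidef := by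
  classical
  refine Finset.sum_induction f _ (fun a b ha hb => ha.add hb) Matrix.PosSemidef.zero
    (fun j _ => hf j)

noncomputable def bvecn {n : ℕ} (j : Fin n → Fin 4) : (Fin n → Fin 2 × Fin 2) → ℂ :=
  fun p => (((Real.sqrt 2)⁻¹ ^ n : ℝ) : ℂ) * ∏ l, pauli (j l) (p l).2 (p l).1

lemma nBell_vec {n : ℕ} (j : Fin n → Fin 4) :
    nBell j = Matrix.vecMulVec (bvecn j) (star (bvecn j)) := by
  ext p q
  simp only [nBell, bell, Matrix.vecMulVec_apply, Pi.star_apply, bvecn, RCLike.star_def,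
    _root_.map_mul, Complex.conj_ofReal, map_prod]
  rw [Finset.prod_mul_distrib, Finset.prod_mul_distrib, Finset.prod_const,
    Finset.card_univ, Fintype.card_fin]
  have hr : (((Real.sqrt 2)⁻¹ ^ n : ℝ) : ℂ) * (((Real.sqrt 2)⁻¹ ^ n : ℝ) : ℂ)
      = ((1:ℂ)/2) ^ n := by
    rw [← Complex.ofReal_mul, ← pow_add]
    have : ((Real.sqrt 2)⁻¹ : ℝ) ^ (n + n) = ((1:ℝ)/2) ^ n := by
      rw [show n + n = 2 * n by ring, pow_mul]
      congr 1
      rw [inv_pow, Real.sq_sqrt (by norm_num : (0:ℝ) ≤ 2)]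
      norm_num
    rw [this]
    push_cast
    ring
  rw [← hr]
  ring

lemma part1 {n : ℕ} (hn : 3 ≤ n) (i : Fin n → Fin 4) (h0 : i ⟨0, Nat.lt_of_lt_of_le (by norm_num) hn⟩ = 0)
    (h1 : ∀ l : Fin n, l.val ≠ 0 → i l ∈ ({1, 2, 3} : Set (Fin 4))) :
    ((1 / 2 ^ n : ℂ) • (1 : Matrix (Fin n → Fin 2 × Fin 2) (Fin n → Fin 2 × Fin 2) ℂ)
      - (2 / 2 ^ n : ℂ) • nBell (fun _ => 2) - PTn (nBell i)).PosSemidef := by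
  rw [key]
  exact psd_sum _ fun j =>
    psd_smul (nBell_vec j ▸ psd_vecMulVec (bvecn j)) (lam_nonneg hn i h0 h1 j)


lemma nBell_trace {n : ℕ} (i : Fin n → Fin 4) : Matrix.trace (nBell i) = 1 := by
  unfold Matrix.trace nBell Matrix.diag
  calc ∑ p : Fin n → Fin 2 × Fin 2, ∏ l, bell (i l) (p l) (p l)
      = ∏ l, ∑ x : Fin 2 × Fin 2, bell (i l) x x := (Fintype.prod_sum (fun (l : Fin n) (x : Fin 2 × Fin 2) => bell (i l) x x)).symm
    _ = 1 := by
        have : ∀ l : Fin n, ∑ x : Fin 2 × Fin 2, bell (i l) x x = 1 := fun l => bell_trace (i l)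
        rw [Finset.prod_congr rfl fun l _ => this l]
        simp

lemma part2 {n : ℕ} (hn : 3 ≤ n) :
    (Matrix.trace ((1 / 2 ^ n : ℂ) • (1 : Matrix (Fin n → Fin 2 × Fin 2)
      (Fin n → Fin 2 × Fin 2) ℂ) - (2 / 2 ^ n : ℂ) • nBell (fun _ => 2))).re < 2 ^ n := by
  rw [Matrix.trace_sub, Matrix.trace_smul, Matrix.trace_smul, Matrix.trace_one,
    nBell_trace]
  have hcard : (Fintype.card (Fin n → Fin 2 × Fin 2) : ℂ) = 4 ^ n := by
    simp [Fintype.card_fun]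
  rw [smul_eq_mul, smul_eq_mul, hcard, mul_one]
  have hval : (1 / 2 ^ n : ℂ) * 4 ^ n - 2 / 2 ^ n
      = (((2:ℝ) ^ n - 2 / 2 ^ n : ℝ) : ℂ) := by
    have h2 : (2 : ℂ) ^ n ≠ 0 := pow_ne_zero _ two_ne_zero
    have h2' : (2 : ℝ) ^ n ≠ 0 := pow_ne_zero _ two_ne_zero
    push_cast
    rw [show (4:ℂ) = 2 * 2 by norm_num, mul_pow]
    field_simp
  rw [hval, Complex.ofReal_re]
  have : (0:ℝ) < 2 / 2 ^ n := by positivity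
  linarith

-- ===== Part 3 machinery =====

lemma pow3 {n : ℕ} (hn : 3 ≤ n) : 2 ^ n ≤ 3 ^ (n - 1) := by
  induction n with
  | zero => omega
  | succ m ih =>
    rcases Nat.lt_or_ge m 3 with h | h
    · interval_cases m <;> simp_all <;> norm_num
    · have := ih (by omega)
      have hm : m - 1 + 1 = m := by omega
      calc 2 ^ (m + 1) = 2 * 2 ^ m := by ring
        _ ≤ 2 * 3 ^ (m - 1) := Nat.mul_le_mul_left _ this
        _ ≤ 3 * 3 ^ (m - 1) := Nat.mul_le_mul_right _ (by norm_num)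
        _ = 3 ^ (m - 1 + 1) := by ring
        _ = 3 ^ m := by rw [hm]

lemma PT_one {d : ℕ} : PT (1 : Matrix (Fin d × Fin d) (Fin d × Fin d) ℂ) = 1 := by
  ext p q
  simp only [PT, Matrix.one_apply, Prod.ext_iff]
  by_cases h1 : p.1 = q.1 <;> by_cases h2 : p.2 = q.2 <;>
    simp [h1, h2, eq_comm]

lemma PT_sum {d m : ℕ} (P : Fin m → Matrix (Fin d × Fin d) (Fin d × Fin d) ℂ) :
    PT (∑ j, P j) = ∑ j, PT (P j) := by
  ext p q
  simp [PT, Matrix.sum_apply]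

lemma PT_sub {d : ℕ} (A B : Matrix (Fin d × Fin d) (Fin d × Fin d) ℂ) :
    PT (A - B) = PT A - PT B := by
  ext p q
  simp [PT]

lemma trace_PT_mul {d : ℕ} (A B : Matrix (Fin d × Fin d) (Fin d × Fin d) ℂ) :
    Matrix.trace (PT A * PT B) = Matrix.trace (A * B) := by
  have h1 : Matrix.trace (PT A * PT B)
      = ∑ z : (Fin d × Fin d) × (Fin d × Fin d),
          A (z.2.1, z.1.2) (z.1.1, z.2.2) * B (z.1.1, z.2.2) (z.2.1, z.1.2) := by
    simp only [Matrix.trace, Matrix.diag, Matrix.mul_apply, PT]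
    conv_rhs => rw [Fintype.sum_prod_type]
  have h2 : Matrix.trace (A * B)
      = ∑ z : (Fin d × Fin d) × (Fin d × Fin d), A z.1 z.2 * B z.2 z.1 := by
    simp only [Matrix.trace, Matrix.diag, Matrix.mul_apply]
    conv_rhs => rw [Fintype.sum_prod_type]
  rw [h1, h2]
  exact Fintype.sum_equiv
    ⟨fun z => ((z.2.1, z.1.2), (z.1.1, z.2.2)), fun z => ((z.2.1, z.1.2), (z.1.1, z.2.2)),
      fun z => rfl, fun z => rfl⟩
    _ _ (fun z => rfl)

lemma trace_mul_nonneg {m : Type*} [Fintype m] [DecidableEq m]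
    {A B : Matrix m m ℂ} (hA : A.PosSemidef) (hB : B.PosSemidef) :
    0 ≤ Matrix.trace (A * B) := by
  obtain ⟨C, rfl⟩ : ∃ C : Matrix m m ℂ, A = Cᴴ * C := by
    open scoped MatrixOrder in
    obtain ⟨X, hX, -, hXA⟩ :=
      CFC.exists_sqrt_of_isSelfAdjoint_of_quasispectrumRestricts hA.isHermitian
        (QuasispectrumRestricts.nnreal_of_nonneg hA.nonneg)
    refine ⟨X, ?_⟩
    rw [← hXA]
    exact congrArg (· * X) hX.star_eq.symm
  rw [Matrix.mul_assoc, Matrix.trace_mul_comm]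
  have h : ∀ i, 0 ≤ (C * B * Cᴴ) i i := by
    intro i
    have := hB.dotProduct_mulVec_nonneg (star (C i))
    convert this using 1
    simp only [Matrix.mul_apply, Matrix.conjTranspose_apply, dotProduct,
      Matrix.mulVec, Pi.star_apply, star_star, Finset.sum_mul, Finset.mul_sum]
    rw [Finset.sum_comm]
    refine Finset.sum_congr rfl fun a _ => Finset.sum_congr rfl fun b _ => ?_
    ring
  calc (0:ℂ) = ∑ i : m, 0 := by simp
    _ ≤ ∑ i, (C * B * Cᴴ) i i := Finset.sum_le_sum fun i _ => h i
    _ = Matrix.trace (C * B * Cᴴ) := rfl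

lemma pauli_row_orth (m : Fin 4) (a b : Fin 2) :
    ∑ t, pauli m a t * (starRingEnd ℂ) (pauli m b t)
      = if a = b then 1 else 0 := by
  have h := congrFun (congrFun (pauli_unitary m) a) b
  simpa [Matrix.mul_apply, Matrix.conjTranspose_apply, Matrix.one_apply,
    RCLike.star_def] using h

lemma pauli_inner (a b : Fin 4) :
    ∑ x : Fin 2 × Fin 2, (starRingEnd ℂ) (pauli a x.2 x.1) * pauli b x.2 x.1
      = if a = b then 2 else 0 := by
  fin_cases a <;> fin_cases b <;>
    simp [pauli, Fintype.sum_prod_type, Fin.sum_univ_two] <;>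
    norm_num [Complex.ext_iff]

lemma bvecn_inner {n : ℕ} {a b : Fin n → Fin 4} (h : a ≠ b) :
    ∑ p, (starRingEnd ℂ) (bvecn a p) * bvecn b p = 0 := by
  obtain ⟨l0, hl0⟩ := Function.ne_iff.mp h
  have hterm : ∀ p, (starRingEnd ℂ) (bvecn a p) * bvecn b p
      = ((((Real.sqrt 2)⁻¹ ^ n : ℝ)) : ℂ) * ((((Real.sqrt 2)⁻¹ ^ n : ℝ)) : ℂ)
        * ∏ l, ((starRingEnd ℂ) (pauli (a l) (p l).2 (p l).1) * pauli (b l) (p l).2 (p l).1) := by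
    intro p
    simp only [bvecn, _root_.map_mul, Complex.conj_ofReal, map_prod]
    rw [Finset.prod_mul_distrib]
    ring
  rw [Finset.sum_congr rfl fun p _ => hterm p, ← Finset.mul_sum,
    ← Fintype.prod_sum (fun (l : Fin n) (x : Fin 2 × Fin 2) =>
      (starRingEnd ℂ) (pauli (a l) x.2 x.1) * pauli (b l) x.2 x.1)]
  rw [Finset.prod_eq_zero (Finset.mem_univ l0) (by rw [pauli_inner, if_neg hl0]), mul_zero]

lemma trace_vmv {m : Type*} [Fintype m] (u v : m → ℂ) :
    Matrix.trace (Matrix.vecMulVec u (star u) * Matrix.vecMulVec v (star v))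
      = (∑ q, (starRingEnd ℂ) (u q) * v q) * (∑ p, (starRingEnd ℂ) (v p) * u p) := by
  simp only [Matrix.trace, Matrix.diag, Matrix.mul_apply, Matrix.vecMulVec_apply,
    Pi.star_apply, RCLike.star_def]
  rw [Finset.sum_mul_sum, Finset.sum_comm]
  exact Finset.sum_congr rfl fun p _ => Finset.sum_congr rfl fun q _ => by ring

lemma nBell_orth {n : ℕ} {a b : Fin n → Fin 4} (h : a ≠ b) :
    Matrix.trace ((nBell a)ᴴ * nBell b) = 0 := by
  rw [nBell_vec a, nBell_vec b, (psd_vecMulVec (bvecn a)).1, trace_vmv,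
    bvecn_inner h, zero_mul]

def EE (n : ℕ) : (Fin n → Fin 2 × Fin 2) ≃ Fin (2^n) × Fin (2^n) :=
  (Equiv.arrowProdEquivProdArrow (Fin n) (fun _ => Fin 2) (fun _ => Fin 2)).trans
    (Equiv.prodCongr finFunctionFinEquiv finFunctionFinEquiv)

lemma EE_symm {n : ℕ} (z : Fin (2^n) × Fin (2^n)) (l : Fin n) :
    (EE n).symm z l = (finFunctionFinEquiv.symm z.1 l, finFunctionFinEquiv.symm z.2 l) := rfl

noncomputable def Wmat {n : ℕ} (i : Fin n → Fin 4) : Matrix (Fin (2^n)) (Fin (2^n)) ℂ :=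
  fun y x => ∏ l, pauli (i l) (finFunctionFinEquiv.symm y l) (finFunctionFinEquiv.symm x l)

lemma Wmat_unitary {n : ℕ} (i : Fin n → Fin 4) :
    Wmat i ∈ Matrix.unitaryGroup (Fin (2^n)) ℂ := by
  rw [Matrix.mem_unitaryGroup_iff]
  ext y y'
  have hstar : ∀ x, (star (Wmat i) : Matrix _ _ ℂ) x y' = (starRingEnd ℂ) (Wmat i y' x) :=
    fun x => rfl
  simp only [Matrix.mul_apply, hstar]
  have h1 : ∀ x, Wmat i y x * (starRingEnd ℂ) (Wmat i y' x)
      = ∏ l, (pauli (i l) (finFunctionFinEquiv.symm y l) (finFunctionFinEquiv.symm x l)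
          * (starRingEnd ℂ) (pauli (i l) (finFunctionFinEquiv.symm y' l) (finFunctionFinEquiv.symm x l))) := by
    intro x
    rw [Wmat, Wmat, map_prod, Finset.prod_mul_distrib]
  rw [Finset.sum_congr rfl fun x _ => h1 x]
  rw [← Equiv.sum_comp finFunctionFinEquiv
    (fun x => ∏ l, (pauli (i l) (finFunctionFinEquiv.symm y l) (finFunctionFinEquiv.symm x l)
          * (starRingEnd ℂ) (pauli (i l) (finFunctionFinEquiv.symm y' l) (finFunctionFinEquiv.symm x l))))]
  simp only [Equiv.symm_apply_apply]
  rw [← Fintype.prod_sum (fun (l : Fin n) (t : Fin 2) =>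
    pauli (i l) (finFunctionFinEquiv.symm y l) t
      * (starRingEnd ℂ) (pauli (i l) (finFunctionFinEquiv.symm y' l) t))]
  rw [Finset.prod_congr rfl fun l _ =>
    pauli_row_orth (i l) (finFunctionFinEquiv.symm y l) (finFunctionFinEquiv.symm y' l)]
  by_cases h : y = y'
  · subst h
    simp [Matrix.one_apply]
  · have h2 : finFunctionFinEquiv.symm y ≠ finFunctionFinEquiv.symm y' := by
      intro hc
      exact h (finFunctionFinEquiv.symm.injective hc)
    obtain ⟨l0, hl0⟩ := Function.ne_iff.mp h2
    rw [Matrix.one_apply_ne h]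
    apply Finset.prod_eq_zero (Finset.mem_univ l0)
    exact if_neg hl0

noncomputable def uvec {n : ℕ} (a : Fin n → Fin 4) : Fin (2^n) × Fin (2^n) → ℂ :=
  fun p => (1 / Real.sqrt ((2^n : ℕ)) : ℂ) * Wmat a p.2 p.1

lemma rho_eq {n : ℕ} (a : Fin n → Fin 4) :
    (nBell a).submatrix ⇑(EE n).symm ⇑(EE n).symm
      = Matrix.vecMulVec (uvec a) (star (uvec a)) := by
  ext p q
  obtain ⟨x, y⟩ := p
  obtain ⟨x', y'⟩ := q
  simp only [Matrix.submatrix_apply, nBell, bell, Matrix.vecMulVec_apply, Pi.star_apply,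
    uvec, RCLike.star_def, _root_.map_mul, map_prod, Wmat, EE_symm, map_div₀, _root_.map_one,
    Complex.conj_ofReal]
  rw [Finset.prod_mul_distrib, Finset.prod_mul_distrib, Finset.prod_const,
    Finset.card_univ, Fintype.card_fin]
  have hcc : (1 / ((Real.sqrt ((2^n : ℕ)) : ℝ) : ℂ)) * (1 / ((Real.sqrt ((2^n : ℕ)) : ℝ) : ℂ))
      = (1/2 : ℂ) ^ n := by
    rw [div_mul_div_comm, one_mul, ← Complex.ofReal_mul,
      Real.mul_self_sqrt (by positivity)]
    rw [div_pow, one_pow]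
    push_cast
    norm_num
  rw [← hcc]
  ring

lemma PT_submatrix {n : ℕ} (M : Matrix (Fin n → Fin 2 × Fin 2) (Fin n → Fin 2 × Fin 2) ℂ) :
    PT (M.submatrix ⇑(EE n).symm ⇑(EE n).symm)
      = (PTn M).submatrix ⇑(EE n).symm ⇑(EE n).symm := by
  ext p q
  obtain ⟨x, y⟩ := p
  obtain ⟨x', y'⟩ := q
  rfl

lemma trace_submatrix_EE {n : ℕ}
    (M : Matrix (Fin n → Fin 2 × Fin 2) (Fin n → Fin 2 × Fin 2) ℂ) :
    Matrix.trace (M.submatrix ⇑(EE n).symm ⇑(EE n).symm) = Matrix.trace M := by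
  simp only [Matrix.trace, Matrix.diag, Matrix.submatrix_apply]
  exact Equiv.sum_comp (EE n).symm (fun z => M z z)

theorem powers_of_two_indistinguishable {n : ℕ} (hn : 3 ≤ n) :
    (∀ i : Fin n → Fin 4, i ⟨0, by omega⟩ = 0 →
      (∀ l : Fin n, l.val ≠ 0 → i l ∈ ({1, 2, 3} : Set (Fin 4))) →
      ((1 / 2 ^ n : ℂ) • (1 : Matrix (Fin n → Fin 2 × Fin 2) (Fin n → Fin 2 × Fin 2) ℂ)
        - (2 / 2 ^ n : ℂ) • nBell (fun _ => 2) - PTn (nBell i)).PosSemidef) ∧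
    (Matrix.trace ((1 / 2 ^ n : ℂ) • (1 : Matrix (Fin n → Fin 2 × Fin 2)
        (Fin n → Fin 2 × Fin 2) ℂ) - (2 / 2 ^ n : ℂ) • nBell (fun _ => 2))).re < 2 ^ n ∧
    (3 ^ (n - 1) ≥ 2 ^ n ∧
      ∃ ρ : Fin (2 ^ n) → Matrix (Fin (2 ^ n) × Fin (2 ^ n)) (Fin (2 ^ n) × Fin (2 ^ n)) ℂ,
        (∀ j, ∃ u : Fin (2 ^ n) × Fin (2 ^ n) → ℂ,
          IsMaxEnt u ∧ ρ j = Matrix.vecMulVec u (star u)) ∧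
        (∀ j j', j ≠ j' → Matrix.trace ((ρ j)ᴴ * ρ j') = 0) ∧
        ∀ P : Fin (2 ^ n) → Matrix (Fin (2 ^ n) × Fin (2 ^ n)) (Fin (2 ^ n) × Fin (2 ^ n)) ℂ,
          (∀ j, (P j).PosSemidef) →
          (∀ j, (PT (P j)).PosSemidef) →
          (∑ j, P j = 1) →
          ∑ j, (Matrix.trace ((P j)ᴴ * ρ j)).re < 2 ^ n) := by
  refine ⟨fun i h0 h1 => part1 hn i h0 h1, part2 hn, pow3 hn, ?_⟩
  -- obtain an injection from `Fin (2^n)` into valid index vectors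
  have hcard : Fintype.card (Fin (2^n)) ≤ Fintype.card (Fin (n-1) → Fin 3) := by
    simp only [Fintype.card_fin, Fintype.card_fun]
    exact pow3 hn
  obtain ⟨emb⟩ := Function.Embedding.nonempty_iff_card_le.mpr hcard
  set g : Fin (2^n) → Fin n → Fin 4 :=
    fun j l => if h : l.val = 0 then 0 else (emb j ⟨l.val - 1, by omega⟩).succ with hg
  have hg0 : ∀ j, ∀ h : (0:ℕ) < n, g j ⟨0, h⟩ = 0 := fun j h => by simp [hg]
  have hg1 : ∀ j, ∀ l : Fin n, l.val ≠ 0 → g j l ∈ ({1, 2, 3} : Set (Fin 4)) := by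
    intro j l hl
    simp only [hg, dif_neg hl]
    generalize emb j ⟨l.val - 1, by omega⟩ = x
    fin_cases x <;> simp [Fin.succ] <;> decide
  have hg_inj : Function.Injective g := by
    intro j j' hjj
    apply emb.injective
    funext m
    have hm : (m : ℕ) + 1 < n := by omega
    have h := congrFun hjj ⟨m.val + 1, hm⟩
    simp only [hg] at h
    rw [dif_neg (by omega), dif_neg (by omega)] at h
    have hmm : (⟨(m : ℕ) + 1 - 1, by omega⟩ : Fin (n-1)) = m := by
      apply Fin.ext
      simp
    rw [hmm] at h
    exact Fin.succ_injective _ h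
  refine ⟨fun j => (nBell (g j)).submatrix ⇑(EE n).symm ⇑(EE n).symm, ?_, ?_, ?_⟩
  · intro j
    exact ⟨uvec (g j), ⟨Wmat (g j), Wmat_unitary (g j), rfl⟩, rho_eq (g j)⟩
  · intro j j' hne
    show Matrix.trace (((nBell (g j)).submatrix ⇑(EE n).symm ⇑(EE n).symm)ᴴ
      * (nBell (g j')).submatrix ⇑(EE n).symm ⇑(EE n).symm) = 0
    rw [Matrix.conjTranspose_submatrix,
      Matrix.submatrix_mul_equiv (nBell (g j))ᴴ (nBell (g j')) _ (EE n).symm _,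
      trace_submatrix_EE]
    exact nBell_orth (fun hc => hne (hg_inj hc))
  · intro P hP hPT hsum
    set Y : Matrix (Fin n → Fin 2 × Fin 2) (Fin n → Fin 2 × Fin 2) ℂ :=
      (1 / 2 ^ n : ℂ) • 1 - (2 / 2 ^ n : ℂ) • nBell (fun _ => 2) with hY
    set Y' := Y.submatrix ⇑(EE n).symm ⇑(EE n).symm with hY'
    set ρ : Fin (2 ^ n) → Matrix (Fin (2 ^ n) × Fin (2 ^ n)) (Fin (2 ^ n) × Fin (2 ^ n)) ℂ :=
      fun j => (nBell (g j)).submatrix ⇑(EE n).symm ⇑(EE n).symm with hρ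
    have hYpt : ∀ j, (Y' - PT (ρ j)).PosSemidef := by
      intro j
      have h1 := (part1 hn (g j) (hg0 j (by omega)) (hg1 j)).submatrix ⇑(EE n).symm
      rw [← hY, Matrix.submatrix_sub] at h1
      rwa [hρ, PT_submatrix]
    have hle : ∑ j, Matrix.trace ((P j)ᴴ * ρ j) ≤ Matrix.trace Y' := by
      calc ∑ j, Matrix.trace ((P j)ᴴ * ρ j)
          = ∑ j, Matrix.trace (PT (P j) * PT (ρ j)) := by
            refine Finset.sum_congr rfl fun j _ => ?_
            rw [(hP j).1, trace_PT_mul]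
        _ ≤ ∑ j, Matrix.trace (PT (P j) * Y') := by
            refine Finset.sum_le_sum fun j _ => ?_
            have h0 := trace_mul_nonneg (hPT j) (hYpt j)
            rw [Matrix.mul_sub, Matrix.trace_sub, sub_nonneg] at h0
            exact h0
        _ = Matrix.trace ((∑ j, PT (P j)) * Y') := by
            rw [Finset.sum_mul, Matrix.trace_sum]
        _ = Matrix.trace Y' := by
            rw [← PT_sum, hsum, PT_one, one_mul]
    have hre : (∑ j, Matrix.trace ((P j)ᴴ * ρ j)).re ≤ (Matrix.trace Y').re :=
      (Complex.le_def.mp hle).1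
    rw [Complex.re_sum] at hre
    calc ∑ j, (Matrix.trace ((P j)ᴴ * ρ j)).re ≤ (Matrix.trace Y').re := hre
      _ = (Matrix.trace Y).re := by rw [hY', trace_submatrix_EE]
      _ < 2 ^ n := part2 hn
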